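/- Let α ≥ 0, γ ≥ 1 be real and β ∈ ℂ with 2(γ+α) > |β|. Then Σ_{n=1}^∞ |A_n|/(n+1) ≤ |β|/(2(γ+α)−|β|), where A_n = β^n Γ(γ+α)/Γ((γ+α)(n+1)). -/

import Mathlib

open Complex

noncomputable def rabA (α γ : ℝ) (β : ℂ) (n : ℕ) : ℂ :=
  β ^ n * (Real.Gamma (γ + α) : ℂ) / (Real.Gamma ((γ + α) * (n + 1)) : ℂ)

noncomputable def rab (α γ : ℝ) (β : ℂ) (z : ℂ) : ℂ :=
  z + ∑' k : ℕ, rabA α γ β (k + 1) * z ^ (k + 2)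

noncomputable def rabPartial (α γ : ℝ) (β : ℂ) (m : ℕ) (z : ℂ) : ℂ :=
  z + ∑ k ∈ Finset.range m, rabA α γ β (k + 1) * z ^ (k + 2)

noncomputable def rabD (α γ : ℝ) (β : ℂ) (z : ℂ) : ℂ :=
  1 + ∑' k : ℕ, ((k : ℂ) + 2) * rabA α γ β (k + 1) * z ^ (k + 1)

noncomputable def rabDPartial (α γ : ℝ) (β : ℂ) (m : ℕ) (z : ℂ) : ℂ :=
  1 + ∑ k ∈ Finset.range m, ((k : ℂ) + 2) * rabA α γ β (k + 1) * z ^ (k + 1)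

noncomputable def rabAlex (α γ : ℝ) (β : ℂ) (z : ℂ) : ℂ :=
  z + ∑' k : ℕ, rabA α γ β (k + 1) / ((k : ℂ) + 2) * z ^ (k + 2)

noncomputable def rabAlexPartial (α γ : ℝ) (β : ℂ) (m : ℕ) (z : ℂ) : ℂ :=
  z + ∑ k ∈ Finset.range m, rabA α γ β (k + 1) / ((k : ℂ) + 2) * z ^ (k + 2)

theorem rabA_alex_sum_bound (α γ : ℝ) (β : ℂ) (hα : 0 ≤ α) (hγ : 1 ≤ γ)
    (hβ : ‖β‖ < 2 * (γ + α)) :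
    (∑' k : ℕ, ‖rabA α γ β (k + 1)‖ / ((k : ℝ) + 2)) ≤
      ‖β‖ / (2 * (γ + α) - ‖β‖) := by
  set c := γ + α with hcdef
  have hc1 : (1:ℝ) ≤ c := by simp only [hcdef]; linarith
  have hc0 : (0:ℝ) < c := by linarith
  have hβ0 : (0:ℝ) ≤ ‖β‖ := norm_nonneg β
  set r : ℝ := ‖β‖ / (2 * c) with hrdef
  have hr0 : 0 ≤ r := div_nonneg hβ0 (by linarith)
  have hr1 : r < 1 := (div_lt_one (by linarith)).2 hβ
  -- key Gamma bound
  have key : ∀ n : ℕ, Real.Gamma c * (c ^ n * (n.factorial : ℝ)) ≤ Real.Gamma (c * (n + 1)) := by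
    intro n
    induction n with
    | zero => simp
    | succ n ih =>
      have hx : (1:ℝ) ≤ c * (n + 1) := by
        have h1 : (1:ℝ) ≤ (n:ℝ) + 1 := by have := Nat.cast_nonneg (α := ℝ) n; linarith
        nlinarith
      have hmono : Real.Gamma (c * (n+1) + 1) ≤ Real.Gamma (c * (n+1) + c) := by
        rcases eq_or_lt_of_le hc1 with h | h
        · rw [← h]
        · exact le_of_lt (Real.Gamma_strictMonoOn_Ici (by simp [Set.mem_Ici]; linarith)
            (by simp [Set.mem_Ici]; linarith) (by linarith))
      have hadd : Real.Gamma (c * (n+1) + 1) = c * (n+1) * Real.Gamma (c * (n+1)) :=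
        Real.Gamma_add_one (by positivity)
      have h2 : c * ((n:ℝ) + 1 + 1) = c * ((n:ℝ) + 1) + c := by ring
      have : c * ((n:ℝ)+1) * (Real.Gamma c * (c ^ n * (n.factorial : ℝ)))
          ≤ Real.Gamma (c * ((n:ℝ)+1+1)) := by
        rw [h2]
        calc c * ((n:ℝ)+1) * (Real.Gamma c * (c ^ n * (n.factorial : ℝ)))
            ≤ c * ((n:ℝ)+1) * Real.Gamma (c * ((n:ℝ)+1)) := by
              apply mul_le_mul_of_nonneg_left ih
              positivity
          _ = Real.Gamma (c * ((n:ℝ)+1) + 1) := hadd.symm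
          _ ≤ _ := hmono
      calc Real.Gamma c * (c ^ (n+1) * ((n+1).factorial : ℝ))
          = c * ((n:ℝ)+1) * (Real.Gamma c * (c ^ n * (n.factorial : ℝ))) := by
            rw [Nat.factorial_succ]; push_cast; ring
        _ ≤ Real.Gamma (c * ((n:ℝ)+1+1)) := this
        _ = Real.Gamma (c * ((n+1 : ℕ) + 1)) := by push_cast; ring_nf
  have hterm : ∀ k : ℕ, ‖rabA α γ β (k + 1)‖ / ((k : ℝ) + 2) ≤ r ^ (k+1) := by
    intro k
    have hG0 : 0 < Real.Gamma c := Real.Gamma_pos_of_pos hc0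
    have hxpos : (0:ℝ) < c * ((k:ℝ) + 1 + 1) := by positivity
    have hG2 : 0 < Real.Gamma (c * ((k:ℝ)+1+1)) := Real.Gamma_pos_of_pos hxpos
    have habs : ‖rabA α γ β (k + 1)‖
        = ‖β‖ ^ (k+1) * Real.Gamma c / Real.Gamma (c * ((k:ℝ)+1+1)) := by
      have heq : ((γ + α) * (((k+1 : ℕ) : ℝ) + 1)) = c * ((k:ℝ)+1+1) := by
        rw [hcdef]; push_cast; ring
      rw [rabA, heq, norm_div, norm_mul, norm_pow,
        Complex.norm_real, Complex.norm_real, Real.norm_eq_abs, Real.norm_eq_abs, abs_of_pos hG0, abs_of_pos hG2]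
    have hfac : ((2:ℝ)) ^ (k+1) ≤ ((k+2).factorial : ℝ) := by
      have h := @Nat.factorial_mul_pow_le_factorial 1 (k+1)
      simp only [Nat.factorial_one, one_mul] at h
      have h' : (1+1:ℕ) ^ (k+1) ≤ (k+2).factorial := by
        calc (1+1:ℕ) ^ (k+1) ≤ (1+(k+1)).factorial := h
          _ = (k+2).factorial := by congr 1; omega
      exact_mod_cast h'
    have hkey := key (k+1)
    have hkey' : Real.Gamma c * (c ^ (k+1) * ((k+1).factorial : ℝ))
        ≤ Real.Gamma (c * ((k:ℝ)+1+1)) := by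
      convert hkey using 3
      push_cast; ring
    have h1 : ((k:ℝ)+2) * ((k+1).factorial : ℝ) = ((k+2).factorial : ℝ) := by
      rw [Nat.factorial_succ (k+1)]; push_cast; ring
    have h2 : ((2:ℝ)) ^ (k+1) ≤ ((k:ℝ)+2) * ((k+1).factorial : ℝ) := by
      rw [h1]; exact hfac
    have hGbig : Real.Gamma c * (2 * c) ^ (k+1)
        ≤ Real.Gamma (c * ((k:ℝ)+1+1)) * ((k:ℝ) + 2) := by
      calc Real.Gamma c * (2 * c) ^ (k+1)
          = Real.Gamma c * c ^ (k+1) * 2 ^ (k+1) := by rw [mul_pow]; ring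
        _ ≤ Real.Gamma c * c ^ (k+1) * (((k:ℝ)+2) * ((k+1).factorial : ℝ)) := by
            apply mul_le_mul_of_nonneg_left h2; positivity
        _ = Real.Gamma c * (c ^ (k+1) * ((k+1).factorial : ℝ)) * ((k:ℝ)+2) := by ring
        _ ≤ Real.Gamma (c * ((k:ℝ)+1+1)) * ((k:ℝ) + 2) :=
            mul_le_mul_of_nonneg_right hkey' (by positivity)
    rw [habs, hrdef, div_pow, div_div, div_le_div_iff₀ (by positivity) (by positivity)]
    calc ‖β‖ ^ (k+1) * Real.Gamma c * (2 * c) ^ (k+1)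
        = ‖β‖ ^ (k+1) * (Real.Gamma c * (2 * c) ^ (k+1)) := by ring
      _ ≤ ‖β‖ ^ (k+1) * (Real.Gamma (c * ((k:ℝ)+1+1)) * ((k:ℝ) + 2)) :=
          mul_le_mul_of_nonneg_left hGbig (by positivity)
  have hgeom : Summable (fun k : ℕ => r ^ (k+1)) := by
    have := (summable_geometric_of_lt_one hr0 hr1).mul_left r
    simpa [pow_succ, mul_comm] using this
  have hnonneg : ∀ k : ℕ, 0 ≤ ‖rabA α γ β (k + 1)‖ / ((k : ℝ) + 2) := by
    intro k; positivity
  have hsumL : Summable (fun k : ℕ => ‖rabA α γ β (k + 1)‖ / ((k : ℝ) + 2)) :=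
    Summable.of_nonneg_of_le hnonneg hterm hgeom
  have h2c : (0:ℝ) < 2 * c := by linarith
  have hd : (0:ℝ) < 2 * c - ‖β‖ := by linarith
  have hfinal : r * (1 - r)⁻¹ = ‖β‖ / (2 * c - ‖β‖) := by
    have h1r : 1 - r = (2 * c - ‖β‖) / (2 * c) := by
      rw [hrdef]; field_simp
    rw [hrdef, h1r, inv_div, div_mul_div_comm, mul_comm (‖β‖) (2*c)]
    exact mul_div_mul_left _ _ (ne_of_gt h2c)
  calc (∑' k : ℕ, ‖rabA α γ β (k + 1)‖ / ((k : ℝ) + 2))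
      ≤ ∑' k : ℕ, r ^ (k+1) := Summable.tsum_le_tsum hterm hsumL hgeom
    _ = r * ∑' k : ℕ, r ^ k := by
        rw [← tsum_mul_left]
        apply tsum_congr
        intro k
        rw [pow_succ]; ring
    _ = r * (1 - r)⁻¹ := by rw [tsum_geometric_of_lt_one hr0 hr1]
    _ = ‖β‖ / (2 * c - ‖β‖) := hfinal
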